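/- Let X ⊆ ℝⁿ be convex and compact, let R: ℝⁿ → ℝ be differentiable on an open set containing X and σ_R-strongly convex with respect to ‖·‖, and let D_R(x, y) = R(x) − R(y) − ⟨∇R(y), x − y⟩ be the associated Bregman divergence. Let x_t ∈ X, g ∈ ℝⁿ, α > 0, and let x_{t+1} be a minimizer over X of x ↦ ⟨g, x − x_t⟩ + D_R(x, x_t)/α. Then for every x ∈ X: D_R(x, x_{t+1}) ≤ D_R(x, x_t) + α ⟨g, x − x_t⟩ + (α²/(2σ_R)) ‖g‖_*². -/

import Mathlib

open MeasureTheory Filter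
open scoped RealInnerProductSpace

/-- `N` is a norm on a real vector space. -/
def IsNorm {E : Type*} [AddCommGroup E] [Module ℝ E] (N : E → ℝ) : Prop :=
  (∀ x, N x = 0 ↔ x = 0) ∧ (∀ (c : ℝ) (x : E), N (c • x) = |c| * N x) ∧
    ∀ x y, N (x + y) ≤ N x + N y

/-- The dual norm `‖y‖_* = sup { ⟨y, x⟩ : N x ≤ 1 }` of a norm `N` on `ℝⁿ`. -/
noncomputable def dualNorm {n : ℕ} (N : EuclideanSpace ℝ (Fin n) → ℝ)
    (y : EuclideanSpace ℝ (Fin n)) : ℝ :=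
  sSup ((fun x => ⟪y, x⟫) '' {x | N x ≤ 1})

/-- The Bregman divergence `D_R(x, y) = R(x) − R(y) − ⟨∇R(y), x − y⟩`. -/
noncomputable def bregman {n : ℕ} (R : EuclideanSpace ℝ (Fin n) → ℝ)
    (x y : EuclideanSpace ℝ (Fin n)) : ℝ :=
  R x - R y - ⟪gradient R y, x - y⟫

section Aux

variable {n : ℕ} {nrm : EuclideanSpace ℝ (Fin n) → ℝ}

/-- Package an `IsNorm` as a seminorm. -/
noncomputable def IsNorm.toSeminorm (hnrm : IsNorm nrm) :
    Seminorm ℝ (EuclideanSpace ℝ (Fin n)) where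
  toFun := nrm
  map_zero' := (hnrm.1 0).mpr rfl
  add_le' := hnrm.2.2
  neg' x := by simpa using hnrm.2.1 (-1) x
  smul' a x := by
    show nrm (a • x) = ‖a‖ * nrm x
    rw [hnrm.2.1 a x, Real.norm_eq_abs]

lemma IsNorm.nonneg (hnrm : IsNorm nrm) (x : EuclideanSpace ℝ (Fin n)) : 0 ≤ nrm x :=
  apply_nonneg hnrm.toSeminorm x

lemma IsNorm.neg' (hnrm : IsNorm nrm) (x : EuclideanSpace ℝ (Fin n)) : nrm (-x) = nrm x :=
  map_neg_eq_map hnrm.toSeminorm x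

/-- Upper equivalence bound: `nrm x ≤ C * ‖x‖`. -/
lemma IsNorm.exists_upper (hnrm : IsNorm nrm) :
    ∃ C : ℝ, 0 ≤ C ∧ ∀ x, nrm x ≤ C * ‖x‖ := by
  classical
  refine ⟨∑ i, nrm (EuclideanSpace.single i 1), Finset.sum_nonneg fun i _ => hnrm.nonneg _,
    fun x => ?_⟩
  have hx : x = ∑ i, x i • EuclideanSpace.single i (1 : ℝ) := by
    have := (EuclideanSpace.basisFun (Fin n) ℝ).sum_repr x
    simpa [EuclideanSpace.basisFun_apply, EuclideanSpace.basisFun_repr] using this.symm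
  calc nrm x = nrm (∑ i, x i • EuclideanSpace.single i (1 : ℝ)) := by rw [← hx]
    _ ≤ ∑ i, nrm (x i • EuclideanSpace.single i (1 : ℝ)) :=
        Finset.le_sum_of_subadditive nrm ((hnrm.1 0).mpr rfl).le hnrm.2.2 _ _
    _ = ∑ i, |x i| * nrm (EuclideanSpace.single i (1 : ℝ)) := by
        refine Finset.sum_congr rfl fun i _ => ?_
        simpa using hnrm.2.1 (x i) (EuclideanSpace.single i 1)
    _ ≤ ∑ i, ‖x‖ * nrm (EuclideanSpace.single i (1 : ℝ)) := by
        refine Finset.sum_le_sum fun i _ => ?_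
        have h1 : |x i| ≤ ‖x‖ := by
          have h := abs_real_inner_le_norm (EuclideanSpace.single i (1:ℝ)) x
          simpa [EuclideanSpace.inner_single_left, EuclideanSpace.norm_single] using h
        exact mul_le_mul_of_nonneg_right h1 (hnrm.nonneg _)
    _ = (∑ i, nrm (EuclideanSpace.single i 1)) * ‖x‖ := by
        rw [Finset.sum_mul]; exact Finset.sum_congr rfl fun i _ => mul_comm _ _

/-- `nrm` is continuous. -/
lemma IsNorm.continuous (hnrm : IsNorm nrm) : Continuous nrm := by
  obtain ⟨C, hC0, hC⟩ := hnrm.exists_upper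
  rw [Metric.continuous_iff]
  intro x ε hε
  by_cases hCpos : C = 0
  · refine ⟨1, one_pos, fun y _ => ?_⟩
    have h1 : nrm (y - x) ≤ 0 := by simpa [hCpos] using hC (y - x)
    have h2 : nrm (x - y) ≤ 0 := by simpa [hCpos] using hC (x - y)
    have hy : nrm y ≤ nrm x := by
      have := hnrm.2.2 (y - x) x; simpa using this.trans (by linarith)
    have hx' : nrm x ≤ nrm y := by
      have := hnrm.2.2 (x - y) y; simpa using this.trans (by linarith)
    have : nrm y = nrm x := le_antisymm hy hx'
    simpa [Real.dist_eq, this] using hε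
  · have hCpos' : 0 < C := lt_of_le_of_ne hC0 (Ne.symm hCpos)
    refine ⟨ε / C, div_pos hε hCpos', fun y hy => ?_⟩
    have hyx : nrm (y - x) ≤ C * ‖y - x‖ := hC _
    have hxy : nrm (x - y) ≤ C * ‖x - y‖ := hC _
    have h1 : nrm y ≤ nrm x + C * ‖y - x‖ := by
      have := hnrm.2.2 (y - x) x; simp at this; linarith
    have h2 : nrm x ≤ nrm y + C * ‖x - y‖ := by
      have := hnrm.2.2 (x - y) y; simp at this; linarith
    have hnorm : ‖y - x‖ = dist y x := (dist_eq_norm y x).symm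
    have hnorm' : ‖x - y‖ = dist y x := by rw [dist_comm]; exact (dist_eq_norm x y).symm
    rw [Real.dist_eq]
    have hd : C * dist y x < ε := by
      have := (lt_div_iff₀ hCpos').mp hy
      linarith [this]
    rw [abs_sub_lt_iff]
    constructor <;> [skip; skip] <;> rw [hnorm] at h1 <;> rw [hnorm'] at h2 <;> linarith

/-- Lower equivalence bound: `c * ‖x‖ ≤ nrm x` for some `c > 0`. -/
lemma IsNorm.exists_lower (hnrm : IsNorm nrm) :
    ∃ c : ℝ, 0 < c ∧ ∀ x, c * ‖x‖ ≤ nrm x := by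
  by_cases hS : (Metric.sphere (0 : EuclideanSpace ℝ (Fin n)) 1).Nonempty
  · obtain ⟨z, hzS, hz⟩ := (isCompact_sphere (0 : EuclideanSpace ℝ (Fin n)) 1).exists_isMinOn
      hS hnrm.continuous.continuousOn
    have hz1 : ‖z‖ = 1 := by simpa using hzS
    have hz0 : z ≠ 0 := by intro h; rw [h] at hz1; simp at hz1
    have hc : 0 < nrm z := by
      rcases lt_or_eq_of_le (hnrm.nonneg z) with h | h
      · exact h
      · exact absurd ((hnrm.1 z).mp h.symm) hz0
    refine ⟨nrm z, hc, fun x => ?_⟩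
    by_cases hx : x = 0
    · simp [hx, (hnrm.1 (0:EuclideanSpace ℝ (Fin n))).mpr rfl]
    · have hxn : 0 < ‖x‖ := norm_pos_iff.mpr hx
      set u := ‖x‖⁻¹ • x with hu
      have huS : u ∈ Metric.sphere (0 : EuclideanSpace ℝ (Fin n)) 1 := by
        simp [hu, norm_smul, abs_of_pos (inv_pos.mpr hxn), inv_mul_cancel₀ (ne_of_gt hxn)]
      have h1 : nrm z ≤ nrm u := hz huS
      have h2 : nrm u = ‖x‖⁻¹ * nrm x := by
        rw [hu, hnrm.2.1, abs_of_pos (inv_pos.mpr hxn)]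
      rw [h2] at h1
      calc nrm z * ‖x‖ ≤ (‖x‖⁻¹ * nrm x) * ‖x‖ := by nlinarith
        _ = nrm x := by field_simp
  · refine ⟨1, one_pos, fun x => ?_⟩
    by_cases hx : x = 0
    · simp [hx, (hnrm.1 (0:EuclideanSpace ℝ (Fin n))).mpr rfl]
    · exfalso
      apply hS
      have hxn : 0 < ‖x‖ := norm_pos_iff.mpr hx
      exact ⟨‖x‖⁻¹ • x, by
        simp [norm_smul, abs_of_pos (inv_pos.mpr hxn), inv_mul_cancel₀ (ne_of_gt hxn)]⟩

lemma IsNorm.bddAbove (hnrm : IsNorm nrm) (g : EuclideanSpace ℝ (Fin n)) :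
    BddAbove ((fun x => ⟪g, x⟫) '' {x | nrm x ≤ 1}) := by
  obtain ⟨c, hc, hlow⟩ := hnrm.exists_lower
  refine ⟨‖g‖ * c⁻¹, fun v hv => ?_⟩
  obtain ⟨x, hx, rfl⟩ := hv
  have h1 : ⟪g, x⟫ ≤ ‖g‖ * ‖x‖ := real_inner_le_norm g x
  have h2 : ‖x‖ ≤ c⁻¹ := by
    have := hlow x
    rw [← le_div_iff₀' hc] at this
    calc ‖x‖ ≤ nrm x / c := this
      _ ≤ 1 / c := by gcongr; exact hx
      _ = c⁻¹ := one_div c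
  calc ⟪g, x⟫ ≤ ‖g‖ * ‖x‖ := h1
    _ ≤ ‖g‖ * c⁻¹ := mul_le_mul_of_nonneg_left h2 (norm_nonneg g)

lemma IsNorm.dualNorm_nonneg (hnrm : IsNorm nrm) (g : EuclideanSpace ℝ (Fin n)) :
    0 ≤ dualNorm nrm g := by
  have h0 : (0 : ℝ) ∈ (fun x => ⟪g, x⟫) '' {x | nrm x ≤ 1} := by
    refine ⟨0, ?_, by simp⟩
    simp [(hnrm.1 (0:EuclideanSpace ℝ (Fin n))).mpr rfl]
  exact le_csSup (hnrm.bddAbove g) h0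

lemma IsNorm.inner_le_dualNorm (hnrm : IsNorm nrm) (g u : EuclideanSpace ℝ (Fin n)) :
    ⟪g, u⟫ ≤ dualNorm nrm g * nrm u := by
  by_cases hu : u = 0
  · simp [hu, (hnrm.1 (0 : EuclideanSpace ℝ (Fin n))).mpr rfl]
  · have ht : 0 < nrm u := by
      rcases lt_or_eq_of_le (hnrm.nonneg u) with h | h
      · exact h
      · exact absurd ((hnrm.1 u).mp h.symm) hu
    set v := (nrm u)⁻¹ • u with hv
    have hv1 : nrm v ≤ 1 := by
      rw [hv, hnrm.2.1, abs_of_pos (inv_pos.mpr ht), inv_mul_cancel₀ (ne_of_gt ht)]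
    have hmem : ⟪g, v⟫ ∈ (fun x => ⟪g, x⟫) '' {x | nrm x ≤ 1} := ⟨v, hv1, rfl⟩
    have h1 : ⟪g, v⟫ ≤ dualNorm nrm g := le_csSup (hnrm.bddAbove g) hmem
    have h2 : ⟪g, v⟫ = (nrm u)⁻¹ * ⟪g, u⟫ := by rw [hv, real_inner_smul_right]
    rw [h2] at h1
    calc ⟪g, u⟫ = nrm u * ((nrm u)⁻¹ * ⟪g, u⟫) := by field_simp
      _ ≤ nrm u * dualNorm nrm g := mul_le_mul_of_nonneg_left h1 (le_of_lt ht)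
      _ = dualNorm nrm g * nrm u := mul_comm _ _

end Aux

/-- One-step mirror-descent inequality: if `x_{t+1}` minimizes
`x ↦ ⟨g, x − x_t⟩ + D_R(x, x_t)/α` over `X`, then for every `x ∈ X`,
`D_R(x, x_{t+1}) ≤ D_R(x, x_t) + α ⟨g, x − x_t⟩ + (α²/(2σ_R)) ‖g‖_*²`. -/
theorem mirror_descent_step {n : ℕ}
    (nrm : EuclideanSpace ℝ (Fin n) → ℝ) (hnrm : IsNorm nrm)
    (Xs : Set (EuclideanSpace ℝ (Fin n))) (hXconv : Convex ℝ Xs) (hXcomp : IsCompact Xs)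
    (R : EuclideanSpace ℝ (Fin n) → ℝ) (σR : ℝ) (hσR : 0 < σR)
    (O : Set (EuclideanSpace ℝ (Fin n))) (hO : IsOpen O) (hXO : Xs ⊆ O)
    (hRdiff : ∀ x ∈ O, DifferentiableAt ℝ R x)
    (hRstrong : ∀ x ∈ O, ∀ y ∈ O,
      R y ≥ R x + ⟪gradient R x, y - x⟫ + σR / 2 * (nrm (y - x)) ^ 2)
    (xt : EuclideanSpace ℝ (Fin n)) (hxt : xt ∈ Xs)
    (g : EuclideanSpace ℝ (Fin n)) (α : ℝ) (hα : 0 < α)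
    (xnext : EuclideanSpace ℝ (Fin n)) (hxnext : xnext ∈ Xs)
    (hmin : ∀ x ∈ Xs,
      ⟪g, xnext - xt⟫ + bregman R xnext xt / α ≤ ⟪g, x - xt⟫ + bregman R x xt / α) :
    ∀ x ∈ Xs,
      bregman R x xnext ≤
        bregman R x xt + α * ⟪g, x - xt⟫ + α ^ 2 / (2 * σR) * (dualNorm nrm g) ^ 2 := by
  intro x hx
  -- variational inequality at xnext
  set e := x - xnext with he
  have key : 0 ≤ ⟪g, e⟫ +
      (⟪gradient R xnext, e⟫ - ⟪gradient R xt, e⟫) / α := by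
    set c := ⟪g, e⟫ + (⟪gradient R xnext, e⟫ - ⟪gradient R xt, e⟫) / α with hc
    set γ : ℝ → EuclideanSpace ℝ (Fin n) := fun t => xnext + t • e with hγdef
    have hγmem : ∀ t ∈ Set.Icc (0:ℝ) 1, γ t ∈ Xs := by
      intro t ht
      have h := hXconv hxnext hx (by linarith [ht.2] : (0:ℝ) ≤ 1 - t) ht.1 (by ring)
      have : (1 - t) • xnext + t • x = γ t := by
        simp only [hγdef, he]; module
      rwa [this] at h
    set ψ : ℝ → ℝ := fun t => ⟪g, γ t - xt⟫ + bregman R (γ t) xt / α with hψdef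
    have hγ0 : γ 0 = xnext := by simp [hγdef]
    have hψmin : ∀ t ∈ Set.Icc (0:ℝ) 1, ψ 0 ≤ ψ t := by
      intro t ht
      have := hmin (γ t) (hγmem t ht)
      simpa [hψdef, hγ0] using this
    -- derivative of ψ at 0 is c
    have hγ' : HasDerivAt γ e 0 := by
      have : HasDerivAt (fun t : ℝ => t • e) ((1:ℝ) • e) 0 :=
        (hasDerivAt_id (0:ℝ)).smul_const e
      simpa [hγdef] using this.const_add xnext
    have hRd : DifferentiableAt ℝ R xnext := hRdiff xnext (hXO hxnext)
    have hRgrad : HasFDerivAt R (InnerProductSpace.toDual ℝ _ (gradient R xnext)) xnext :=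
      hasGradientAt_iff_hasFDerivAt.mp hRd.hasGradientAt
    have hRγ : HasDerivAt (fun t => R (γ t)) ⟪gradient R xnext, e⟫ 0 := by
      have hcomp : HasDerivAt (fun t => R (γ t))
          ((InnerProductSpace.toDual ℝ (EuclideanSpace ℝ (Fin n)) (gradient R xnext)) e) 0 := by
        refine HasFDerivAt.comp_hasDerivAt 0 ?_ hγ'
        rw [hγ0]; exact hRgrad
      rwa [InnerProductSpace.toDual_apply_apply] at hcomp
    have hinner1 : HasDerivAt (fun t => ⟪g, γ t - xt⟫) ⟪g, e⟫ 0 := by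
      have heq : (fun t => ⟪g, γ t - xt⟫) = fun t => ⟪g, xnext - xt⟫ + t * ⟪g, e⟫ := by
        funext t
        have hγt : γ t - xt = (xnext - xt) + t • e := by simp only [hγdef]; abel
        rw [hγt, inner_add_right, real_inner_smul_right]
      rw [heq]
      simpa using (hasDerivAt_mul_const ⟪g, e⟫).const_add ⟪g, xnext - xt⟫
    have hinner2 : HasDerivAt (fun t => ⟪gradient R xt, γ t - xt⟫) ⟪gradient R xt, e⟫ 0 := by
      have heq : (fun t => ⟪gradient R xt, γ t - xt⟫)
          = fun t => ⟪gradient R xt, xnext - xt⟫ + t * ⟪gradient R xt, e⟫ := by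
        funext t
        have hγt : γ t - xt = (xnext - xt) + t • e := by simp only [hγdef]; abel
        rw [hγt, inner_add_right, real_inner_smul_right]
      rw [heq]
      simpa using (hasDerivAt_mul_const ⟪gradient R xt, e⟫).const_add ⟪gradient R xt, xnext - xt⟫
    have hψ' : HasDerivAt ψ c 0 := by
      have hbre : HasDerivAt (fun t => bregman R (γ t) xt)
          (⟪gradient R xnext, e⟫ - ⟪gradient R xt, e⟫) 0 :=
        (hRγ.sub_const (R xt)).sub hinner2
      exact hinner1.add (hbre.div_const α)
    -- right derivative of a right-minimum is nonneg
    have hslope : Tendsto (slope ψ 0) (nhdsWithin 0 (Set.Ioi 0)) (nhds c) := by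
      refine (hasDerivAt_iff_tendsto_slope.mp hψ').mono_left (nhdsWithin_mono _ ?_)
      intro t ht
      exact ne_of_gt ht
    refine ge_of_tendsto hslope ?_
    filter_upwards [Ioo_mem_nhdsGT_of_mem (Set.mem_Ico.mpr ⟨le_refl (0:ℝ), one_pos⟩)] with t ht
    rw [slope_def_field]
    have h1 : ψ 0 ≤ ψ t := hψmin t ⟨le_of_lt ht.1, le_of_lt ht.2⟩
    have h2 : (0:ℝ) < t - 0 := by simpa using ht.1
    apply div_nonneg <;> linarith
  -- three-point identity
  have h3 : bregman R x xnext = bregman R x xt - bregman R xnext xt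
      - (⟪gradient R xnext, e⟫ - ⟪gradient R xt, e⟫) := by
    rw [he]
    simp only [bregman, inner_sub_right]
    ring
  -- strong convexity lower bound on bregman
  have hstr : σR / 2 * (nrm (xnext - xt)) ^ 2 ≤ bregman R xnext xt := by
    have := hRstrong xt (hXO hxt) xnext (hXO hxnext)
    simp only [bregman]
    linarith
  -- dual norm bound
  set d := dualNorm nrm g with hd
  set s := nrm (xnext - xt) with hs
  have hdual : ⟪g, xt - xnext⟫ ≤ d * s := by
    have h := hnrm.inner_le_dualNorm g (xt - xnext)
    have : nrm (xt - xnext) = s := by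
      rw [hs, ← hnrm.neg' (xt - xnext)]
      congr 1
      abel
    rwa [this] at h
  have hd0 : 0 ≤ d := hnrm.dualNorm_nonneg g
  have hs0 : 0 ≤ s := hnrm.nonneg _
  -- combine
  have hkey' : -(⟪gradient R xnext, e⟫ - ⟪gradient R xt, e⟫) ≤ α * ⟪g, e⟫ := by
    have h := mul_le_mul_of_nonneg_left key (le_of_lt hα)
    rw [mul_add] at h
    have hΔ : α * ((⟪gradient R xnext, e⟫ - ⟪gradient R xt, e⟫) / α)
        = ⟪gradient R xnext, e⟫ - ⟪gradient R xt, e⟫ := by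
      field_simp
    rw [hΔ] at h
    linarith
  have hsplit : ⟪g, e⟫ = ⟪g, x - xt⟫ + ⟪g, xt - xnext⟫ := by
    rw [← inner_add_right]
    congr 1
    rw [he]; abel
  have hyoung : α * (d * s) ≤ σR / 2 * s ^ 2 + α ^ 2 / (2 * σR) * d ^ 2 := by
    have hσne : σR ≠ 0 := ne_of_gt hσR
    have hiden : σR / 2 * s ^ 2 + α ^ 2 / (2 * σR) * d ^ 2 - α * (d * s)
        = (σR * s - α * d) ^ 2 / (2 * σR) := by
      field_simp
      ring
    have hpos : 0 ≤ (σR * s - α * d) ^ 2 / (2 * σR) := by positivity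
    linarith
  calc bregman R x xnext
      = bregman R x xt - bregman R xnext xt - (⟪gradient R xnext, e⟫ - ⟪gradient R xt, e⟫) := h3
    _ ≤ bregman R x xt - bregman R xnext xt + α * ⟪g, e⟫ := by linarith
    _ = bregman R x xt - bregman R xnext xt + α * ⟪g, x - xt⟫ + α * ⟪g, xt - xnext⟫ := by
        rw [hsplit]; ring
    _ ≤ bregman R x xt - σR / 2 * s ^ 2 + α * ⟪g, x - xt⟫ + α * (d * s) := by
        have := mul_le_mul_of_nonneg_left hdual (le_of_lt hα)
        linarith
    _ ≤ bregman R x xt + α * ⟪g, x - xt⟫ + α ^ 2 / (2 * σR) * d ^ 2 := by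
        linarith
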